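/- Let a > 0 and t > 0. Then there exists a constant C ≥ 0 such that for every positive integer n, |15^{−n}·(5 + cos(a·√(12t/n)) + 9·cos(a·√(2t/n)))^{n} − e^{−a²t}| ≤ C/n³. -/

import Mathlib

open Real Finset

theorem cos_taylor8 {x : ℝ} (hx : |x| ≤ 1) :
    |Real.cos x - (1 - x ^ 2 / 2 + x ^ 4 / 24 - x ^ 6 / 720)| ≤ |x| ^ 8 := by
  have h4 : (Complex.I) ^ 4 = 1 := by
    rw [show (4:ℕ) = 2*2 from rfl, pow_mul, Complex.I_sq]; norm_num
  have h6 : (Complex.I) ^ 6 = -1 := by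
    rw [show (6:ℕ) = 2*3 from rfl, pow_mul, Complex.I_sq]; norm_num
  have hb1 : ‖Complex.exp (x * Complex.I) - ∑ m ∈ range 8, (x * Complex.I) ^ m / m.factorial‖
      ≤ ‖(x:ℂ) * Complex.I‖ ^ 8 * ((8:ℕ).succ * (((8:ℕ).factorial * (8:ℕ) : ℝ))⁻¹) := by
    have := Complex.exp_bound (x := (x:ℂ) * Complex.I) (by simpa) (n := 8) (by norm_num)
    simpa using this
  have hb2 : ‖Complex.exp (-x * Complex.I) - ∑ m ∈ range 8, (-x * Complex.I) ^ m / m.factorial‖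
      ≤ ‖-(x:ℂ) * Complex.I‖ ^ 8 * ((8:ℕ).succ * (((8:ℕ).factorial * (8:ℕ) : ℝ))⁻¹) := by
    have := Complex.exp_bound (x := -(x:ℂ) * Complex.I) (by simpa) (n := 8) (by norm_num)
    simpa using this
  calc
    |Real.cos x - (1 - x ^ 2 / 2 + x ^ 4 / 24 - x ^ 6 / 720)|
        = ‖Complex.cos x - (1 - (x : ℂ) ^ 2 / 2 + (x : ℂ) ^ 4 / 24 - (x : ℂ) ^ 6 / 720)‖ := by
      rw [← Real.norm_eq_abs, ← Complex.norm_real]; push_cast; simp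
    _ = ‖((Complex.exp (x * Complex.I) - ∑ m ∈ range 8, (x * Complex.I) ^ m / m.factorial) +
              (Complex.exp (-x * Complex.I) - ∑ m ∈ range 8, (-x * Complex.I) ^ m / m.factorial)) / 2‖ := by
      congr 1
      rw [Complex.cos]
      simp only [Finset.sum_range_succ, Finset.range_zero, Finset.sum_empty]
      norm_num [Nat.factorial]
      ring_nf
      rw [h4, h6, Complex.I_sq]
      ring_nf
    _ ≤ (‖Complex.exp (x * Complex.I) - ∑ m ∈ range 8, (x * Complex.I) ^ m / m.factorial‖ +
          ‖Complex.exp (-x * Complex.I) - ∑ m ∈ range 8, (-x * Complex.I) ^ m / m.factorial‖) / 2 := by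
      rw [norm_div]
      gcongr
      · exact norm_add_le _ _
      · simp
    _ ≤ |x| ^ 8 := by
      have e1 : ‖(x:ℂ) * Complex.I‖ = |x| := by simp
      have e2 : ‖-(x:ℂ) * Complex.I‖ = |x| := by simp
      rw [e1] at hb1; rw [e2] at hb2
      have : (((8:ℕ).succ : ℝ) * (((8:ℕ).factorial * (8:ℕ) : ℝ))⁻¹) ≤ 1 := by
        norm_num [Nat.factorial]
      nlinarith [pow_nonneg (abs_nonneg x) 8]

theorem exp_taylor4 {y : ℝ} (hy0 : 0 ≤ y) (hy1 : y ≤ 1) :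
    |Real.exp (-y) - (1 - y + y ^ 2 / 2 - y ^ 3 / 6)| ≤ y ^ 4 := by
  have h := Real.exp_bound (x := -y) (by rwa [abs_neg, abs_of_nonneg hy0]) (n := 4) (by norm_num)
  have hs : (∑ i ∈ range 4, (-y) ^ i / i.factorial) = 1 - y + y ^ 2 / 2 - y ^ 3 / 6 := by
    simp [Finset.sum_range_succ, Nat.factorial]; ring
  rw [hs, abs_neg, abs_of_nonneg hy0] at h
  calc |Real.exp (-y) - (1 - y + y ^ 2 / 2 - y ^ 3 / 6)| ≤ y ^ 4 * ((4:ℕ).succ * (((4:ℕ).factorial * (4:ℕ) : ℝ))⁻¹) := h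
    _ ≤ y ^ 4 := by
        norm_num [Nat.factorial]
        nlinarith [pow_nonneg hy0 4]

theorem pow_sub_pow_abs_le {p q : ℝ} (hp : |p| ≤ 1) (hq : |q| ≤ 1) (n : ℕ) :
    |p ^ n - q ^ n| ≤ n * |p - q| := by
  induction n with
  | zero => simp
  | succ n ih =>
    have key : p ^ (n+1) - q ^ (n+1) = p * (p ^ n - q ^ n) + q ^ n * (p - q) := by ring
    have h1 : |p ^ (n+1) - q ^ (n+1)| ≤ |p| * |p ^ n - q ^ n| + |q| ^ n * |p - q| := by
      rw [key]
      refine (abs_add_le _ _).trans ?_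
      rw [abs_mul, abs_mul, abs_pow]
    have h2 : |p| * |p ^ n - q ^ n| ≤ |p ^ n - q ^ n| := by
      nlinarith [abs_nonneg (p ^ n - q ^ n), abs_nonneg p]
    have h3 : |q| ^ n * |p - q| ≤ |p - q| := by
      have : |q| ^ n ≤ 1 := pow_le_one₀ (abs_nonneg q) hq
      nlinarith [abs_nonneg (p - q)]
    push_cast
    nlinarith [ih]

theorem chernoff_heat_third_sin_rate (a t : ℝ) (ha : 0 < a) (ht : 0 < t) :
    ∃ C : ℝ, 0 ≤ C ∧ ∀ n : ℕ, 0 < n →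
      |(1 / 15 ^ n)
          * (5 + Real.cos (a * Real.sqrt (12 * t / n))
              + 9 * Real.cos (a * Real.sqrt (2 * t / n))) ^ n
          - Real.exp (-(a ^ 2) * t)|
        ≤ C / (n : ℝ) ^ 3 := by
  set N : ℕ := ⌈12 * a ^ 2 * t⌉₊ + 1 with hN
  refine ⟨max (1393 * a ^ 8 * t ^ 4) (2 * (N : ℝ) ^ 3), le_max_of_le_right (by positivity), ?_⟩
  intro n hn
  have hnR : (0 : ℝ) < (n : ℝ) := by exact_mod_cast hn
  have hn3 : (0 : ℝ) < (n : ℝ) ^ 3 := by positivity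
  set x₁ : ℝ := a * Real.sqrt (12 * t / n) with hx₁def
  set x₂ : ℝ := a * Real.sqrt (2 * t / n) with hx₂def
  set p : ℝ := (5 + Real.cos x₁ + 9 * Real.cos x₂) / 15 with hpdef
  set y : ℝ := a ^ 2 * t / n with hydef
  have hy0 : 0 ≤ y := by positivity
  -- rewrite LHS
  have hrw : (1 / 15 ^ n) * (5 + Real.cos x₁ + 9 * Real.cos x₂) ^ n = p ^ n := by
    rw [hpdef, div_pow]; ring
  rw [hrw]
  have hexp : Real.exp (-(a ^ 2) * t) = Real.exp (-y) ^ n := by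
    rw [← Real.exp_nat_mul]
    congr 1
    rw [hydef]; field_simp
  rw [hexp]
  set q : ℝ := Real.exp (-y) with hqdef
  have hp1 : |p| ≤ 1 := by
    rw [abs_le]
    constructor
    · have := Real.neg_one_le_cos x₁
      have := Real.neg_one_le_cos x₂
      rw [hpdef]; linarith
    · have := Real.cos_le_one x₁
      have := Real.cos_le_one x₂
      rw [hpdef]; linarith
  have hq1 : |q| ≤ 1 := by
    rw [abs_of_pos (Real.exp_pos _)]
    exact Real.exp_le_one_iff.mpr (by linarith)
  by_cases hbig : 12 * a ^ 2 * t ≤ (n : ℝ)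
  · -- large n : genuine estimate
    have e₁ : x₁ ^ 2 = 12 * y := by
      rw [hx₁def, mul_pow, Real.sq_sqrt (by positivity), hydef]; ring
    have e₂ : x₂ ^ 2 = 2 * y := by
      rw [hx₂def, mul_pow, Real.sq_sqrt (by positivity), hydef]; ring
    have hy12 : 12 * y ≤ 1 := by
      rw [show 12 * y = 12 * a ^ 2 * t / (n : ℝ) from by rw [hydef]; ring,
        div_le_one hnR]
      linarith
    have hy1 : y ≤ 1 := by linarith
    have hx1 : |x₁| ≤ 1 := by
      nlinarith [sq_abs x₁, abs_nonneg x₁]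
    have hx2 : |x₂| ≤ 1 := by
      nlinarith [sq_abs x₂, abs_nonneg x₂]
    have h1 : |Real.cos x₁ - (1 - 6*y + 6*y^2 - 12/5*y^3)| ≤ 20736 * y ^ 4 := by
      have h := cos_taylor8 hx1
      have ep : (1 : ℝ) - x₁ ^ 2 / 2 + x₁ ^ 4 / 24 - x₁ ^ 6 / 720
          = 1 - 6*y + 6*y^2 - 12/5*y^3 := by
        linear_combination (-1/2 + (x₁^2 + 12*y)/24 - (x₁^4 + 12*y*x₁^2 + 144*y^2)/720) * e₁
      have e8 : |x₁| ^ 8 = 20736 * y ^ 4 := by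
        rw [show |x₁| ^ 8 = (|x₁| ^ 2) ^ 4 by ring, sq_abs, e₁]; ring
      rw [ep, e8] at h; exact h
    have h2 : |Real.cos x₂ - (1 - y + y^2/6 - y^3/90)| ≤ 16 * y ^ 4 := by
      have h := cos_taylor8 hx2
      have ep : (1 : ℝ) - x₂ ^ 2 / 2 + x₂ ^ 4 / 24 - x₂ ^ 6 / 720
          = 1 - y + y^2/6 - y^3/90 := by
        linear_combination (-1/2 + (x₂^2 + 2*y)/24 - (x₂^4 + 2*y*x₂^2 + 4*y^2)/720) * e₂
      have e8 : |x₂| ^ 8 = 16 * y ^ 4 := by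
        rw [show |x₂| ^ 8 = (|x₂| ^ 2) ^ 4 by ring, sq_abs, e₂]; ring
      rw [ep, e8] at h; exact h
    have h3 : |q - (1 - y + y^2/2 - y^3/6)| ≤ y ^ 4 := exp_taylor4 hy0 hy1
    have hpq : |p - q| ≤ 1393 * y ^ 4 := by
      have key : p - q = (Real.cos x₁ - (1 - 6*y + 6*y^2 - 12/5*y^3)) / 15
          + 9 * (Real.cos x₂ - (1 - y + y^2/6 - y^3/90)) / 15
          - (q - (1 - y + y^2/2 - y^3/6)) := by
        rw [hpdef]; ring
      have t1 : |p - q| ≤ |(Real.cos x₁ - (1 - 6*y + 6*y^2 - 12/5*y^3)) / 15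
          + 9 * (Real.cos x₂ - (1 - y + y^2/6 - y^3/90)) / 15|
          + |q - (1 - y + y^2/2 - y^3/6)| := by
        rw [key]; exact abs_sub _ _
      have t2 : |(Real.cos x₁ - (1 - 6*y + 6*y^2 - 12/5*y^3)) / 15
          + 9 * (Real.cos x₂ - (1 - y + y^2/6 - y^3/90)) / 15|
          ≤ |(Real.cos x₁ - (1 - 6*y + 6*y^2 - 12/5*y^3)) / 15|
          + |9 * (Real.cos x₂ - (1 - y + y^2/6 - y^3/90)) / 15| := abs_add_le _ _
      have t3 : |(Real.cos x₁ - (1 - 6*y + 6*y^2 - 12/5*y^3)) / 15|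
          = |Real.cos x₁ - (1 - 6*y + 6*y^2 - 12/5*y^3)| / 15 := by
        rw [abs_div]; norm_num
      have t4 : |9 * (Real.cos x₂ - (1 - y + y^2/6 - y^3/90)) / 15|
          = 9 * |Real.cos x₂ - (1 - y + y^2/6 - y^3/90)| / 15 := by
        rw [abs_div, abs_mul]; norm_num
      linarith
    have hfinal : |p ^ n - q ^ n| ≤ 1393 * a ^ 8 * t ^ 4 / (n : ℝ) ^ 3 := by
      calc |p ^ n - q ^ n| ≤ n * |p - q| := pow_sub_pow_abs_le hp1 hq1 n
        _ ≤ n * (1393 * y ^ 4) := by gcongr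
        _ = 1393 * a ^ 8 * t ^ 4 / (n : ℝ) ^ 3 := by
            rw [hydef]; field_simp
    refine hfinal.trans ?_
    gcongr
    exact le_max_left _ _
  · -- small n : crude bound
    have hnN : (n : ℝ) ≤ (N : ℝ) := by
      push_neg at hbig
      have : (n : ℝ) ≤ (⌈12 * a ^ 2 * t⌉₊ : ℝ) := le_trans hbig.le (Nat.le_ceil _)
      rw [hN]; push_cast; linarith
    have hlhs : |p ^ n - q ^ n| ≤ 2 := by
      calc |p ^ n - q ^ n| ≤ |p ^ n| + |q ^ n| := abs_sub _ _
        _ ≤ 1 + 1 := by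
            rw [abs_pow, abs_pow]
            exact add_le_add (pow_le_one₀ (abs_nonneg p) hp1) (pow_le_one₀ (abs_nonneg q) hq1)
        _ = 2 := by norm_num
    refine hlhs.trans ?_
    rw [le_div_iff₀ hn3]
    calc (2 : ℝ) * (n : ℝ) ^ 3 ≤ 2 * (N : ℝ) ^ 3 := by gcongr
      _ ≤ max (1393 * a ^ 8 * t ^ 4) (2 * (N : ℝ) ^ 3) := le_max_right _ _
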